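/- Let C₀ be a symmetric positive definite n×n real matrix, A an m×n real matrix, and Γ a symmetric positive definite m×m real matrix. Set α > 0 and define C(t) := C₀ (E + α t AᵀΓ⁻¹A C₀)⁻¹ for t ≥ 0. Then C(t) solves the matrix ODE Ċ(t) = −α C(t) AᵀΓ⁻¹A C(t) with C(0) = C₀. -/

import Mathlib

open Matrix

theorem aux_isUnit {n m : ℕ} (C₀ : Matrix (Fin n) (Fin n) ℝ) (hC₀ : C₀.PosDef)
    (A : Matrix (Fin m) (Fin n) ℝ) (Γ : Matrix (Fin m) (Fin m) ℝ) (hΓ : Γ.PosDef)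
    (c : ℝ) (hc : 0 ≤ c) : IsUnit (1 + c • (Aᵀ * Γ⁻¹ * A * C₀)) := by
  have hK : (Aᵀ * Γ⁻¹ * A).PosSemidef := by
    have := hΓ.inv.posSemidef.conjTranspose_mul_mul_same A
    rwa [conjTranspose_eq_transpose_of_trivial] at this
  rw [Matrix.isUnit_iff_isUnit_det, isUnit_iff_ne_zero]
  intro hdet
  obtain ⟨v, hv, hv0⟩ := (Matrix.exists_mulVec_eq_zero_iff).mpr hdet
  have hexp : v + c • ((Aᵀ * Γ⁻¹ * A) *ᵥ (C₀ *ᵥ v)) = 0 := by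
    have := hv0
    rwa [add_mulVec, one_mulVec, smul_mulVec, ← mulVec_mulVec] at this
  set w := C₀ *ᵥ v with hw
  have hdot : w ⬝ᵥ v + c * (w ⬝ᵥ ((Aᵀ * Γ⁻¹ * A) *ᵥ w)) = 0 := by
    have := congrArg (fun u => w ⬝ᵥ u) hexp
    simpa [dotProduct_add, dotProduct_smul, smul_eq_mul] using this
  have h1 : 0 < w ⬝ᵥ v := by
    have := hC₀.dotProduct_mulVec_pos hv
    simpa [dotProduct_comm, hw] using this
  have h2 : 0 ≤ w ⬝ᵥ ((Aᵀ * Γ⁻¹ * A) *ᵥ w) := by simpa using hK.dotProduct_mulVec_nonneg w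
  nlinarith

theorem aux_deriv {n : ℕ} (α : ℝ) (C₀ M : Matrix (Fin n) (Fin n) ℝ)
    (t : ℝ) (hu : IsUnit (1 + (α * t) • M)) (i j : Fin n) :
    HasDerivAt (fun s : ℝ => (C₀ * Ring.inverse (1 + (α * s) • M)) i j)
      ((C₀ * -((1 + (α * t) • M)⁻¹ * ((α • M) * (1 + (α * t) • M)⁻¹))) i j) t := by
  letI : NormedRing (Matrix (Fin n) (Fin n) ℝ) := Matrix.linftyOpNormedRing
  letI : NormedAlgebra ℝ (Matrix (Fin n) (Fin n) ℝ) := Matrix.linftyOpNormedAlgebra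
  letI : CompleteSpace (Matrix (Fin n) (Fin n) ℝ) :=
    FiniteDimensional.complete ℝ (Matrix (Fin n) (Fin n) ℝ)
  obtain ⟨u, hu⟩ := hu
  have h1 : HasDerivAt (fun s : ℝ => 1 + (α * s) • M) (α • M) t := by
    have h : HasDerivAt (fun s : ℝ => α * s) α t := by
      simpa using (hasDerivAt_id t).const_mul α
    exact (h.smul_const M).const_add (1 : Matrix (Fin n) (Fin n) ℝ)
  have h2 := hasFDerivAt_ringInverse (𝕜 := ℝ) u
  rw [hu] at h2
  have h3 := h2.comp_hasDerivAt t h1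
  let L : Matrix (Fin n) (Fin n) ℝ →ₗ[ℝ] ℝ :=
    { toFun := fun X => (C₀ * X) i j,
      map_add' := fun X Y => by simp [Matrix.mul_add]
      map_smul' := fun c X => by simp [Matrix.mul_smul] }
  have h4 := (LinearMap.toContinuousLinearMap L).hasFDerivAt.comp_hasDerivAt t h3
  have hinv : ((↑u⁻¹ : Matrix (Fin n) (Fin n) ℝ)) = (1 + (α * t) • M)⁻¹ := by
    rw [Matrix.coe_units_inv, hu]
  have hval : (LinearMap.toContinuousLinearMap L)
      ((-((ContinuousLinearMap.mulLeftRight ℝ (Matrix (Fin n) (Fin n) ℝ)) ↑u⁻¹) ↑u⁻¹) (α • M))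
      = (C₀ * -((1 + (α * t) • M)⁻¹ * ((α • M) * (1 + (α * t) • M)⁻¹))) i j := by
    simp only [ContinuousLinearMap.neg_apply, ContinuousLinearMap.mulLeftRight_apply, hinv,
      LinearMap.coe_toContinuousLinearMap', L, LinearMap.coe_mk, AddHom.coe_mk]
    rw [mul_assoc]
  exact hval ▸ h4

theorem covariance_ode {n m : ℕ} (α : ℝ) (hα : 0 < α)
    (C₀ : Matrix (Fin n) (Fin n) ℝ) (hC₀ : C₀.PosDef)
    (A : Matrix (Fin m) (Fin n) ℝ)
    (Γ : Matrix (Fin m) (Fin m) ℝ) (hΓ : Γ.PosDef)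
    (C : ℝ → Matrix (Fin n) (Fin n) ℝ)
    (hC : ∀ t : ℝ, C t = C₀ * (1 + (α * t) • (Aᵀ * Γ⁻¹ * A * C₀))⁻¹) :
    C 0 = C₀ ∧
    ∀ t : ℝ, 0 ≤ t → ∀ i j : Fin n,
      HasDerivAt (fun s => C s i j) ((-α • (C t * (Aᵀ * Γ⁻¹ * A) * C t)) i j) t := by
  constructor
  · rw [hC 0]; simp
  · intro t ht i j
    have hu := aux_isUnit C₀ hC₀ A Γ hΓ (α * t) (mul_nonneg hα.le ht)
    have hd := aux_deriv α C₀ (Aᵀ * Γ⁻¹ * A * C₀) t hu i j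
    have hfun : (fun s : ℝ =>
        ((C₀ * Ring.inverse (1 + (α * s) • (Aᵀ * Γ⁻¹ * A * C₀)) :
          Matrix (Fin n) (Fin n) ℝ)) i j) = fun s => C s i j := by
      funext s
      rw [hC s, nonsing_inv_eq_ringInverse, nonsing_inv_eq_ringInverse]
    rw [hfun] at hd
    have hval : C₀ * -((1 + (α * t) • (Aᵀ * Γ⁻¹ * A * C₀))⁻¹ *
          ((α • (Aᵀ * Γ⁻¹ * A * C₀)) * (1 + (α * t) • (Aᵀ * Γ⁻¹ * A * C₀))⁻¹))
        = -α • (C t * (Aᵀ * Γ⁻¹ * A) * C t) := by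
      rw [hC t]
      simp only [Matrix.mul_neg, neg_smul, Matrix.smul_mul, Matrix.mul_smul, mul_assoc]
    rw [hval] at hd
    exact hd
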